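/- Let P = k[y_1,...,y_{e−1}] be a polynomial ring over a field k, let f_1,...,f_c be a regular sequence of quadrics in P, and let g_1,...,g_c be linear forms in P[y_e]. If the ideal (f_1 − y_e g_1, ..., f_c − y_e g_c, y_e) of P[y_e] equals (f_1,...,f_c, y_e), then f_1 − y_e g_1, ..., f_c − y_e g_c is a regular sequence in P[y_e], and y_e is a non-zerodivisor on P[y_e]/(f_1 − y_e g_1, ..., f_c − y_e g_c). -/

import Mathlib

open MvPolynomial Pointwise

section Aux

variable {k : Type*} [Field k] {n : ℕ}

/-- If `t` has zero constant term, every monomial of `t^N * x` has degree ≥ N. -/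
lemma coeff_pow_mul_eq_zero' {t x : MvPolynomial (Fin n) k}
    (ht : constantCoeff t = 0) :
    ∀ (N : ℕ) (m : Fin n →₀ ℕ), m.degree < N → coeff m (t ^ N * x) = 0 := by
  intro N
  induction N with
  | zero => intro m hm; omega
  | succ N ih =>
    intro m hm
    rw [pow_succ, mul_comm (t ^ N) t, mul_assoc, coeff_mul]
    refine Finset.sum_eq_zero fun p hp => ?_
    rw [Finset.HasAntidiagonal.mem_antidiagonal] at hp
    rcases eq_or_ne p.1 0 with h0 | h0
    · have : coeff p.1 t = 0 := by rwa [h0]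
      simp [this]
    · have h1 : 1 ≤ p.1.degree := by
        rcases Nat.eq_zero_or_pos p.1.degree with h | h
        · exact absurd (Finsupp.degree_eq_zero_iff _ |>.mp h) h0
        · exact h
      have h2 : p.2.degree < N := by
        have h3 := congrArg Finsupp.degree hp
        simp only [Finsupp.degree_eq_weight_one, map_add] at h3 h1 hm
        simp only [Finsupp.degree_eq_weight_one]
        omega
      rw [ih p.2 h2, mul_zero]

lemma homogeneousComponent_pow_mul_eq_zero' {t x : MvPolynomial (Fin n) k}
    (ht : constantCoeff t = 0) {N d : ℕ} (hd : d < N) :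
    homogeneousComponent d (t ^ N * x) = 0 := by
  ext m
  rw [coeff_homogeneousComponent, coeff_zero]
  split
  · next h => exact coeff_pow_mul_eq_zero' ht N m (h ▸ hd)
  · rfl

/-- If `J` is an ideal closed under taking homogeneous components and
`(1 - t) * x ∈ J` with `t` of zero constant term, then `x ∈ J`. -/
lemma mem_of_sub_mul_mem' {J : Ideal (MvPolynomial (Fin n) k)}
    (hJ : ∀ (i : ℕ) (p : MvPolynomial (Fin n) k), p ∈ J → homogeneousComponent i p ∈ J)
    {t x : MvPolynomial (Fin n) k} (ht : constantCoeff t = 0)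
    (hx : x - t * x ∈ J) : x ∈ J := by
  have hN : ∀ N : ℕ, x - t ^ N * x ∈ J := by
    intro N
    induction N with
    | zero => simpa using J.zero_mem
    | succ N ih =>
      have : x - t ^ (N + 1) * x = (x - t * x) + t * (x - t ^ N * x) := by ring
      rw [this]
      exact J.add_mem hx (J.mul_mem_left t ih)
  set N := x.totalDegree + 1 with hNdef
  have hcomp : ∀ d, d < N → homogeneousComponent d x ∈ J := by
    intro d hd
    have h1 := hJ d _ (hN N)
    rw [map_sub, homogeneousComponent_pow_mul_eq_zero' ht hd, sub_zero] at h1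
    exact h1
  rw [← sum_homogeneousComponent x]
  exact Ideal.sum_mem _ fun d hd => hcomp d (Finset.mem_range.mp hd)

/-- A polynomial with nonzero constant term is a nonzerodivisor modulo an ideal
closed under homogeneous components. -/
lemma mem_of_mul_mem_of_constantCoeff_ne_zero' {J : Ideal (MvPolynomial (Fin n) k)}
    (hJ : ∀ (i : ℕ) (p : MvPolynomial (Fin n) k), p ∈ J → homogeneousComponent i p ∈ J)
    {s x : MvPolynomial (Fin n) k} (hs : constantCoeff s ≠ 0)
    (hsx : s * x ∈ J) : x ∈ J := by
  set c := constantCoeff s with hc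
  refine mem_of_sub_mul_mem' hJ (t := 1 - C c⁻¹ * s) ?_ ?_
  · rw [map_sub, map_mul, map_one, constantCoeff_C, ← hc, inv_mul_cancel₀ hs, sub_self]
  · have : x - (1 - C c⁻¹ * s) * x = C c⁻¹ * (s * x) := by ring
    rw [this]
    exact J.mul_mem_left _ hsx

attribute [local instance] MvPolynomial.gradedAlgebra

lemma homogeneousComponent_mem_span' {S : Set (MvPolynomial (Fin n) k)}
    (hS : ∀ s ∈ S, ∃ d, s.IsHomogeneous d) (i : ℕ) (p : MvPolynomial (Fin n) k)
    (hp : p ∈ Ideal.span S) : homogeneousComponent i p ∈ Ideal.span S := by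
  have hhom : (Ideal.span S).IsHomogeneous (homogeneousSubmodule (Fin n) k) :=
    Ideal.homogeneous_span _ S fun x hx => by
      obtain ⟨d, hd⟩ := hS x hx
      exact ⟨d, (mem_homogeneousSubmodule _ _).mpr hd⟩
  have := hhom i hp
  rwa [show ((DirectSum.decompose (homogeneousSubmodule (Fin n) k) p i : _) :
      MvPolynomial (Fin n) k) = homogeneousComponent i p from
    MvPolynomial.decomposition.decompose'_apply p i] at this

lemma smul_top_eq_self' {R : Type*} [CommRing R] (I : Ideal R) :
    (I • (⊤ : Submodule R R)) = I := by
  rw [Ideal.smul_eq_mul, Ideal.mul_top]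

end Aux

section Eps

variable (k : Type*) [CommRing k] (e' : ℕ)

/-- Evaluation killing the last variable. -/
noncomputable def epsHom : MvPolynomial (Fin (e' + 1)) k →ₐ[k] MvPolynomial (Fin e') k :=
  aeval (Fin.lastCases 0 X)

variable {k e'}

lemma epsHom_rename (p : MvPolynomial (Fin e') k) :
    epsHom k e' (rename Fin.castSucc p) = p := by
  rw [epsHom, aeval_rename]
  have : (Fin.lastCases 0 X ∘ Fin.castSucc : Fin e' → MvPolynomial (Fin e') k) = X := by
    funext i
    simp [Function.comp]
  rw [this]
  simp [aeval_X_left]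

lemma epsHom_X_last : epsHom k e' (X (Fin.last e')) = 0 := by
  rw [epsHom, aeval_X]
  simp

lemma ker_epsHom :
    RingHom.ker (epsHom k e' : MvPolynomial (Fin (e' + 1)) k →+* MvPolynomial (Fin e') k) =
      Ideal.span {X (Fin.last e')} := by
  apply le_antisymm
  · intro p hp
    have hmk : ∀ q : MvPolynomial (Fin (e' + 1)) k,
        Ideal.Quotient.mk (Ideal.span {X (Fin.last e')}) q =
        Ideal.Quotient.mk (Ideal.span {X (Fin.last e')})
          (rename Fin.castSucc (epsHom k e' q)) := by
      intro q
      have : (Ideal.Quotient.mk (Ideal.span {(X (Fin.last e') : MvPolynomial (Fin (e' + 1)) k)})) =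
          ((Ideal.Quotient.mk (Ideal.span {(X (Fin.last e') : MvPolynomial (Fin (e' + 1)) k)})).comp
            ((rename Fin.castSucc).toRingHom.comp
              (epsHom k e' : MvPolynomial (Fin (e' + 1)) k →+* MvPolynomial (Fin e') k))) := by
        apply MvPolynomial.ringHom_ext
        · intro a; simp [epsHom]
        · intro i
          refine Fin.lastCases ?_ ?_ i
          · rw [RingHom.comp_apply]
            have h1 : (epsHom k e' (X (Fin.last e')) : MvPolynomial (Fin e') k) = 0 :=
              epsHom_X_last
            simp only [RingHom.comp_apply, AlgHom.toRingHom_eq_coe, RingHom.coe_coe] at *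
            rw [h1]
            simp [Ideal.Quotient.eq_zero_iff_mem, Ideal.subset_span]
          · intro i
            have h1 : epsHom k e' (X i.castSucc) = X i := by
              rw [epsHom, aeval_X]
              simp
            simp only [RingHom.comp_apply, AlgHom.toRingHom_eq_coe, RingHom.coe_coe]
            rw [h1, rename_X]
      exact congrFun (congrArg DFunLike.coe this) q
    have h2 := hmk p
    rw [RingHom.mem_ker] at hp
    rw [show ((epsHom k e') p : MvPolynomial (Fin e') k) = 0 from hp] at h2
    simp only [map_zero] at h2
    rwa [← Ideal.Quotient.eq_zero_iff_mem]
  · rw [Ideal.span_le, Set.singleton_subset_iff]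
    rw [SetLike.mem_coe, RingHom.mem_ker]
    exact epsHom_X_last

lemma epsHom_surjective :
    Function.Surjective (epsHom k e' : MvPolynomial (Fin (e' + 1)) k → MvPolynomial (Fin e') k) :=
  fun p => ⟨rename Fin.castSucc p, epsHom_rename p⟩

end Eps

section QuotEquiv

variable {k : Type*} [Field k] {e' : ℕ}

lemma smulTopEq :
    ((X (Fin.last e') : MvPolynomial (Fin (e' + 1)) k) • ⊤ :
        Submodule (MvPolynomial (Fin (e' + 1)) k) (MvPolynomial (Fin (e' + 1)) k)) =
      RingHom.ker (epsHom k e' :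
        MvPolynomial (Fin (e' + 1)) k →+* MvPolynomial (Fin e') k) := by
  rw [ker_epsHom, ← Submodule.ideal_span_singleton_smul, smul_top_eq_self']

noncomputable def quotEquivLast :
    (MvPolynomial (Fin (e' + 1)) k ⧸
      ((X (Fin.last e') : MvPolynomial (Fin (e' + 1)) k) • ⊤ :
        Submodule (MvPolynomial (Fin (e' + 1)) k) (MvPolynomial (Fin (e' + 1)) k))) ≃+
      MvPolynomial (Fin e') k :=
  ((Submodule.quotEquivOfEq _ _ smulTopEq).toAddEquiv).trans
    (RingHom.quotientKerEquivOfSurjective epsHom_surjective).toAddEquiv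

lemma quotEquivLast_mk (q : MvPolynomial (Fin (e' + 1)) k) :
    quotEquivLast (Submodule.Quotient.mk q) = epsHom k e' q := by
  show (RingHom.quotientKerEquivOfSurjective epsHom_surjective)
      ((Submodule.quotEquivOfEq _ _ smulTopEq) (Submodule.Quotient.mk q)) = _
  rw [Submodule.quotEquivOfEq_mk]
  show (RingHom.quotientKerEquivOfSurjective epsHom_surjective)
      (Ideal.Quotient.mk _ q) = _
  rw [RingHom.quotientKerEquivOfSurjective, RingHom.quotientKerEquivOfRightInverse.apply,
    RingHom.kerLift_mk]
  rfl

lemma quotEquivLast_smul (r : MvPolynomial (Fin (e' + 1)) k)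
    (z : MvPolynomial (Fin (e' + 1)) k ⧸
      ((X (Fin.last e') : MvPolynomial (Fin (e' + 1)) k) • ⊤ :
        Submodule (MvPolynomial (Fin (e' + 1)) k) (MvPolynomial (Fin (e' + 1)) k))) :
    quotEquivLast (r • z) = epsHom k e' r • quotEquivLast z := by
  obtain ⟨q, rfl⟩ := Submodule.Quotient.mk_surjective _ z
  rw [← Submodule.Quotient.mk_smul, quotEquivLast_mk, quotEquivLast_mk, smul_eq_mul,
    smul_eq_mul, map_mul]

end QuotEquiv

set_option maxHeartbeats 2000000 in
open RingTheory.Sequence in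
theorem stmt15 {k : Type*} [Field k] (e' c : ℕ)
    (f : Fin c → MvPolynomial (Fin e') k)
    (hf2 : ∀ i, (f i).IsHomogeneous 2)
    (hfreg : RingTheory.Sequence.IsRegular (MvPolynomial (Fin e') k) (List.ofFn f))
    (g : Fin c → MvPolynomial (Fin (e' + 1)) k)
    (hg1 : ∀ i, (g i).IsHomogeneous 1)
    (hideal :
      Ideal.span (insert (MvPolynomial.X (Fin.last e'))
          (Set.range fun i => MvPolynomial.rename Fin.castSucc (f i) -
            MvPolynomial.X (Fin.last e') * g i)) =
        Ideal.span (insert (MvPolynomial.X (Fin.last e'))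
          (Set.range fun i => MvPolynomial.rename Fin.castSucc (f i)))) :
    RingTheory.Sequence.IsRegular (MvPolynomial (Fin (e' + 1)) k)
      (List.ofFn fun i => MvPolynomial.rename Fin.castSucc (f i) -
        MvPolynomial.X (Fin.last e') * g i) ∧
    IsSMulRegular
      (MvPolynomial (Fin (e' + 1)) k ⧸
        Ideal.span (Set.range fun i => MvPolynomial.rename Fin.castSucc (f i) -
          MvPolynomial.X (Fin.last e') * g i))
      (Ideal.Quotient.mk
        (Ideal.span (Set.range fun i => MvPolynomial.rename Fin.castSucc (f i) -
          MvPolynomial.X (Fin.last e') * g i))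
        (MvPolynomial.X (Fin.last e'))) := by
  classical
  set F : Fin c → MvPolynomial (Fin (e' + 1)) k := fun i =>
    rename Fin.castSucc (f i) - X (Fin.last e') * g i with hFdef
  set y : MvPolynomial (Fin (e' + 1)) k := X (Fin.last e') with hydef
  -- homogeneity facts
  have hF2 : ∀ i, (F i).IsHomogeneous 2 := fun i =>
    ((hf2 i).rename_isHomogeneous).sub
      (by simpa using (isHomogeneous_X k (Fin.last e')).mul (hg1 i))
  have hmemhom : ∀ r ∈ (y :: List.ofFn F : List (MvPolynomial (Fin (e' + 1)) k)),
      ∃ d, 0 < d ∧ r.IsHomogeneous d := by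
    intro r hr
    rcases List.mem_cons.mp hr with h | h
    · exact ⟨1, one_pos, h ▸ isHomogeneous_X k (Fin.last e')⟩
    · obtain ⟨i, rfl⟩ := List.mem_ofFn.mp h
      exact ⟨2, two_pos, hF2 i⟩
  have hcc : ∀ r ∈ (y :: List.ofFn F : List (MvPolynomial (Fin (e' + 1)) k)),
      constantCoeff r = 0 := by
    intro r hr
    obtain ⟨d, hd, hhom⟩ := hmemhom r hr
    have := hhom.coeff_eq_zero (d := 0) (by simpa using hd.ne)
    simpa [constantCoeff_eq] using this
  -- the easy regular sequence y :: F
  have hB : IsWeaklyRegular (MvPolynomial (Fin (e' + 1)) k) (y :: List.ofFn F) := by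
    rw [isWeaklyRegular_cons_iff]
    constructor
    · intro u v huv
      have huv' := huv
      simp only [smul_eq_mul] at huv'
      exact mul_left_cancel₀ (X_ne_zero (Fin.last e')) huv'
    · have hfor : List.Forall₂
          (fun (r : MvPolynomial (Fin (e' + 1)) k) (s : MvPolynomial (Fin e') k) =>
            ∀ x : MvPolynomial (Fin (e' + 1)) k ⧸
                ((X (Fin.last e') : MvPolynomial (Fin (e' + 1)) k) • ⊤ :
                  Submodule (MvPolynomial (Fin (e' + 1)) k) (MvPolynomial (Fin (e' + 1)) k)),
              quotEquivLast (r • x) = s • quotEquivLast x)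
          (List.ofFn F) (List.ofFn f) := by
        rw [List.ofFn_eq_map, List.ofFn_eq_map, List.forall₂_map_right_iff,
          List.forall₂_map_left_iff]
        refine List.forall₂_same.mpr fun i _ x => ?_
        rw [quotEquivLast_smul]
        have : epsHom k e' (F i) = f i := by
          rw [hFdef]
          simp only [hydef, map_sub, map_mul, epsHom_X_last, epsHom_rename, zero_mul, sub_zero]
        rw [this]
      exact (AddEquiv.isWeaklyRegular_congr hfor).mpr hfreg.toIsWeaklyRegular
  -- permute to F ++ [y]
  have hperm : List.Perm (y :: List.ofFn F) (List.ofFn F ++ [y]) :=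
    (List.perm_append_singleton _ _).symm
  have hcond : ∀ (a b : MvPolynomial (Fin (e' + 1)) k)
      (rs₀ : List (MvPolynomial (Fin (e' + 1)) k)),
      List.Subperm (a :: b :: rs₀) (y :: List.ofFn F) →
      let K := Submodule.torsionBy (MvPolynomial (Fin (e' + 1)) k)
        ((MvPolynomial (Fin (e' + 1)) k) ⧸
          (Ideal.ofList rs₀ • ⊤ :
            Submodule (MvPolynomial (Fin (e' + 1)) k) (MvPolynomial (Fin (e' + 1)) k))) b
      K = a • K → K = ⊥ := by
    intro a b rs₀ hsub
    intro K hK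
    have hsubset : ∀ x ∈ (a :: b :: rs₀ : List _), x ∈ (y :: List.ofFn F : List _) :=
      fun x hx => hsub.subset hx
    have hfg : K.FG := IsNoetherian.noetherian K
    have hle : K ≤ Ideal.span {a} • K := by
      rw [Submodule.ideal_span_singleton_smul]
      exact hK.le
    obtain ⟨r, hr1, hr0⟩ :=
      Submodule.exists_sub_one_mem_and_smul_eq_zero_of_fg_of_le_smul _ K hfg hle
    have hrcc : constantCoeff r ≠ 0 := by
      obtain ⟨q, hq⟩ := Ideal.mem_span_singleton'.mp hr1
      have hacc : constantCoeff a = 0 := hcc a (hsubset a List.mem_cons_self)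
      have : constantCoeff (r - 1) = 0 := by rw [← hq, map_mul, hacc, mul_zero]
      rw [map_sub, map_one, sub_eq_zero] at this
      rw [this]; exact one_ne_zero
    -- each element of rs₀ is homogeneous
    have hrs₀hom : ∀ s ∈ {x | x ∈ rs₀}, ∃ d,
        (s : MvPolynomial (Fin (e' + 1)) k).IsHomogeneous d := by
      intro s hs
      obtain ⟨d, _, hd⟩ := hmemhom s
        (hsubset s (List.mem_cons_of_mem _ (List.mem_cons_of_mem _ hs)))
      exact ⟨d, hd⟩
    rw [eq_bot_iff]
    intro z hz
    obtain ⟨x, rfl⟩ := Submodule.Quotient.mk_surjective _ z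
    have hr0z := hr0 _ hz
    rw [← Submodule.Quotient.mk_smul, Submodule.Quotient.mk_eq_zero,
      smul_top_eq_self'] at hr0z
    rw [smul_eq_mul] at hr0z
    have hxI : x ∈ Ideal.ofList rs₀ :=
      mem_of_mul_mem_of_constantCoeff_ne_zero'
        (fun i p hp => homogeneousComponent_mem_span' hrs₀hom i p hp) hrcc hr0z
    rw [Submodule.mem_bot, Submodule.Quotient.mk_eq_zero, smul_top_eq_self']
    exact hxI
  have hW := hB.prototype_perm hperm hcond
  -- split the permuted sequence
  rw [isWeaklyRegular_append_iff] at hW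
  obtain ⟨hW1, hW2⟩ := hW
  have hofList : Ideal.ofList (List.ofFn F) = Ideal.span (Set.range F) := by
    unfold Ideal.ofList
    congr 1
    ext x
    exact List.mem_ofFn
  constructor
  · refine ⟨hW1, fun htop => ?_⟩
    have h1 : (1 : MvPolynomial (Fin (e' + 1)) k) ∈
        (⊤ : Submodule (MvPolynomial (Fin (e' + 1)) k) (MvPolynomial (Fin (e' + 1)) k)) :=
      trivial
    rw [htop, smul_top_eq_self'] at h1
    have hle : Ideal.ofList (List.ofFn F) ≤
        RingHom.ker (constantCoeff : MvPolynomial (Fin (e' + 1)) k →+* k) := by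
      rw [Ideal.ofList, Ideal.span_le]
      intro x hx
      exact hcc x (List.mem_cons_of_mem _ hx)
    have := hle h1
    rw [RingHom.mem_ker, map_one] at this
    exact one_ne_zero this
  · rw [isWeaklyRegular_singleton_iff] at hW2
    rw [hofList, smul_top_eq_self'] at hW2
    intro u v huv
    apply hW2
    show y • u = y • v
    obtain ⟨u', rfl⟩ := Submodule.Quotient.mk_surjective _ u
    obtain ⟨v', rfl⟩ := Submodule.Quotient.mk_surjective _ v
    have key : ∀ w : MvPolynomial (Fin (e' + 1)) k,
        y • (Submodule.Quotient.mk w :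
            MvPolynomial (Fin (e' + 1)) k ⧸ Ideal.span (Set.range F)) =
          Ideal.Quotient.mk (Ideal.span (Set.range F)) y •
            Ideal.Quotient.mk (Ideal.span (Set.range F)) w := by
      intro w
      rw [← Submodule.Quotient.mk_smul, smul_eq_mul, smul_eq_mul,
        Ideal.Quotient.mk_eq_mk, ← map_mul]
    rw [key, key]
    exact huv
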